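/- Selection-backdoor recovery with unbiased covariate data: suppose Z is backdoor admissible for (X, Y) so that P(Y = y | do(X = x)) = Σ_z P(Y = y | X = x, Z = z) P(Z = z), and suppose additionally that Y ⟂ S | {X, Z}. Then P(Y = y | do(X = x)) = Σ_z P(Y = y | X = x, Z = z, S = 1) · P(Z = z), i.e., the effect is computable from selection-biased conditional data together with the unbiased marginal of Z. -/

import Mathlib

open scoped Classical

/-- Probability of event `E` under weight function `p` on a finite sample space. -/
noncomputable def Pr {Ω : Type*} [Fintype Ω] (p : Ω → ℝ) (E : Ω → Prop) : ℝ :=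
  ∑ ω : Ω, if E ω then p ω else 0

/-- Conditional probability of `E` given `F`. -/
noncomputable def cPr {Ω : Type*} [Fintype Ω] (p : Ω → ℝ) (E F : Ω → Prop) : ℝ :=
  Pr p (fun ω => E ω ∧ F ω) / Pr p F


lemma Pr_nonneg {Ω : Type*} [Fintype Ω] (p : Ω → ℝ) (hp : ∀ ω, 0 ≤ p ω) (E : Ω → Prop) :
    0 ≤ Pr p E := by
  apply Finset.sum_nonneg; intro ω _; split <;> simp [hp ω]

lemma Pr_mono {Ω : Type*} [Fintype Ω] (p : Ω → ℝ) (hp : ∀ ω, 0 ≤ p ω) {E F : Ω → Prop}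
    (h : ∀ ω, E ω → F ω) : Pr p E ≤ Pr p F := by
  apply Finset.sum_le_sum; intro ω _
  by_cases hE : E ω
  · simp [hE, h ω hE]
  · simp only [hE, if_false]; split <;> simp [hp ω]

lemma Pr_congr {Ω : Type*} [Fintype Ω] (p : Ω → ℝ) {E F : Ω → Prop}
    (h : ∀ ω, E ω ↔ F ω) : Pr p E = Pr p F := by
  unfold Pr; apply Finset.sum_congr rfl; intro ω _; simp [h ω]

/-- Selection-backdoor recovery: backdoor adjustment together with Y ⟂ S | {X, Z}
allows computing the causal effect from selection-biased conditionals and the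
unbiased marginal of Z. -/
theorem selection_backdoor_recovery
    {Ω 𝒳 𝒴 𝒵 : Type*} [Fintype Ω] [Fintype 𝒵]
    (p : Ω → ℝ) (hp : ∀ ω, 0 ≤ p ω) (hsum : ∑ ω, p ω = 1)
    (X : Ω → 𝒳) (Y : Ω → 𝒴) (Z : Ω → 𝒵) (S : Ω → ℕ)
    (hS01 : ∀ ω, S ω = 0 ∨ S ω = 1)
    (x : 𝒳) (y : 𝒴)
    (Pdo : ℝ)  -- the interventional quantity P(Y = y | do(X = x))
    (hadjust : Pdo = ∑ z : 𝒵, cPr p (fun ω => Y ω = y) (fun ω => X ω = x ∧ Z ω = z)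
        * Pr p (fun ω => Z ω = z))
    (hci : ∀ z : 𝒵,
      cPr p (fun ω => Y ω = y ∧ S ω = 1) (fun ω => X ω = x ∧ Z ω = z)
        = cPr p (fun ω => Y ω = y) (fun ω => X ω = x ∧ Z ω = z)
          * cPr p (fun ω => S ω = 1) (fun ω => X ω = x ∧ Z ω = z))
    (hpos : ∀ z : 𝒵, 0 < Pr p (fun ω => Z ω = z) →
      0 < Pr p (fun ω => X ω = x ∧ Z ω = z ∧ S ω = 1)) :
    Pdo = ∑ z : 𝒵, cPr p (fun ω => Y ω = y) (fun ω => X ω = x ∧ Z ω = z ∧ S ω = 1)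
        * Pr p (fun ω => Z ω = z) := by
  rw [hadjust]
  apply Finset.sum_congr rfl
  intro z _
  by_cases hz : 0 < Pr p (fun ω => Z ω = z)
  · have hB := hpos z hz
    have hA : 0 < Pr p (fun ω => X ω = x ∧ Z ω = z) := by
      calc (0:ℝ) < _ := hB
        _ ≤ _ := Pr_mono p hp (by tauto)
    have h1 : Pr p (fun ω => (Y ω = y ∧ S ω = 1) ∧ X ω = x ∧ Z ω = z)
        = Pr p (fun ω => Y ω = y ∧ X ω = x ∧ Z ω = z ∧ S ω = 1) :=
      Pr_congr p (by tauto)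
    have h2 : Pr p (fun ω => S ω = 1 ∧ X ω = x ∧ Z ω = z)
        = Pr p (fun ω => X ω = x ∧ Z ω = z ∧ S ω = 1) :=
      Pr_congr p (by tauto)
    have key := hci z
    unfold cPr at key ⊢
    rw [h1, h2] at key
    have : Pr p (fun ω => Y ω = y ∧ X ω = x ∧ Z ω = z ∧ S ω = 1)
        = Pr p (fun ω => Y ω = y ∧ X ω = x ∧ Z ω = z)
          * Pr p (fun ω => X ω = x ∧ Z ω = z ∧ S ω = 1)
          / Pr p (fun ω => X ω = x ∧ Z ω = z) := by
      field_simp at key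
      field_simp
      apply mul_right_cancel₀ hA.ne'
      linear_combination (Pr p (fun ω => X ω = x ∧ Z ω = z)) * key
    rw [this]
    field_simp
  · have hz0 : Pr p (fun ω => Z ω = z) = 0 :=
      le_antisymm (not_lt.mp hz) (Pr_nonneg p hp _)
    simp [hz0]
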